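/- Let n be a positive integer, let t be an odd prime, and let m = 3 or m = p + 2 for an odd prime p, with t ≠ m - 2. Then r_{m,t}(n) = r'_{m,t}(n) - 1. -/

import Mathlib

/-- The `c`-th `m`-gonal number: `P(m,c) = c((m-2)c - (m-4))/2`. -/
def polygonal (m c : ℤ) : ℤ := c * ((m - 2) * c - (m - 4)) / 2

/-- `r_{m,t}(n)`: the number of unordered pairs `{a,b}` of positive integers with
`a + b = n` such that `ab = t·P(m,c)` for some `c`, where `c` ranges over positive
integers if `m = 3` or `m = 4`, and over all integers if `m > 4`. -/
noncomputable def rmt (m t n : ℕ) : ℕ :=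
  Set.ncard {p : ℕ × ℕ | 0 < p.1 ∧ p.1 ≤ p.2 ∧ p.1 + p.2 = n ∧
    ∃ c : ℤ, ((m = 3 ∨ m = 4) → 0 < c) ∧ (p.1 : ℤ) * p.2 = t * polygonal m c}

/-- `r'_{m,t}(n)`: the number of pairs `(x,y)` of nonnegative integers with
`2(m-2)n² + t(m-4)² = 2(m-2)x² + t y²`. -/
noncomputable def rmt' (m t n : ℕ) : ℕ :=
  Set.ncard {p : ℕ × ℕ |
    2 * ((m : ℤ) - 2) * (n : ℤ) ^ 2 + t * ((m : ℤ) - 4) ^ 2 =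
    2 * ((m : ℤ) - 2) * (p.1 : ℤ) ^ 2 + t * (p.2 : ℤ) ^ 2}

/-- `d_A(n)`: the number of positive divisors of `n` not divisible by any prime in `A`.
Equivalently, `∏_{p prime, p ∉ A} (1 + ord_p(n))`. -/
def dA (A : Finset ℕ) (n : ℕ) : ℕ :=
  (n.divisors.filter (fun d => ∀ p ∈ A, ¬ p ∣ d)).card

def Sset (m t n : ℕ) : Set (ℕ × ℕ) := {p : ℕ × ℕ | 0 < p.1 ∧ p.1 ≤ p.2 ∧ p.1 + p.2 = n ∧
    ∃ c : ℤ, ((m = 3 ∨ m = 4) → 0 < c) ∧ (p.1 : ℤ) * p.2 = t * polygonal m c}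

def S'set (m t n : ℕ) : Set (ℕ × ℕ) := {p : ℕ × ℕ |
    2 * ((m : ℤ) - 2) * (n : ℤ) ^ 2 + t * ((m : ℤ) - 4) ^ 2 =
    2 * ((m : ℤ) - 2) * (p.1 : ℤ) ^ 2 + t * (p.2 : ℤ) ^ 2}

lemma rmt_eq (m t n : ℕ) : rmt m t n = (Sset m t n).ncard := rfl
lemma rmt'_eq (m t n : ℕ) : rmt' m t n = (S'set m t n).ncard := rfl

lemma mem_Sset {m t n : ℕ} {p : ℕ × ℕ} : p ∈ Sset m t n ↔ (0 < p.1 ∧ p.1 ≤ p.2 ∧ p.1 + p.2 = n ∧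
    ∃ c : ℤ, ((m = 3 ∨ m = 4) → 0 < c) ∧ (p.1 : ℤ) * p.2 = t * polygonal m c) := Iff.rfl

lemma mem_S'set {m t n : ℕ} {p : ℕ × ℕ} : p ∈ S'set m t n ↔
    (2 * ((m : ℤ) - 2) * (n : ℤ) ^ 2 + t * ((m : ℤ) - 4) ^ 2 =
    2 * ((m : ℤ) - 2) * (p.1 : ℤ) ^ 2 + t * (p.2 : ℤ) ^ 2) := Iff.rfl

lemma two_mul_polygonal (m : ℕ) (hm : Odd m) (c : ℤ) :
    2 * polygonal (m : ℤ) c = c * (((m:ℤ) - 2) * c - ((m:ℤ) - 4)) := by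
  have hmo : Odd ((m:ℤ)) := Int.odd_coe_nat m |>.mpr hm
  have heven : Even (c * (((m:ℤ) - 2) * c - ((m:ℤ) - 4))) := by
    rcases Int.even_or_odd c with hc | hc
    · exact hc.mul_right _
    · refine Even.mul_left ?_ _
      have h1 : Odd (((m:ℤ) - 2) * c) := (hmo.sub_even ⟨1, rfl⟩).mul hc
      have h2 : Odd ((m:ℤ) - 4) := hmo.sub_even ⟨2, rfl⟩
      exact h1.sub_odd h2
  unfold polygonal
  exact Int.mul_ediv_cancel' heven.two_dvd

lemma odd_prime_dvd_even {q z : ℤ} (hq : Prime q) (hodd : Odd q) (h1 : q ∣ z) (h2 : Even z) :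
    2 * q ∣ z := by
  obtain ⟨w, hw⟩ := h2
  have hz : z = 2 * w := by linarith
  have h2w : q ∣ 2 * w := hz ▸ h1
  rcases hq.dvd_mul.mp h2w with h | h
  · exfalso
    obtain ⟨k, hk⟩ := h
    rcases Int.even_or_odd k with hk2 | hk2
    · obtain ⟨j, hj⟩ := hk2
      have h2' : 2 = q * j + q * j := by
        calc (2:ℤ) = q * k := hk
        _ = q * (j + j) := by rw [hj]
        _ = q * j + q * j := by ring
      have : 1 = q * j := by linarith
      exact hq.not_isUnit (IsUnit.of_mul_eq_one j this.symm)
    · have hodd2 : Odd (q * k) := hodd.mul hk2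
      rw [← hk] at hodd2
      obtain ⟨r, hr⟩ := hodd2
      omega
  · obtain ⟨w', hw'⟩ := h
    exact ⟨w', by rw [hz, hw']; ring⟩

theorem aux_main (m t n : ℕ) (q s : ℤ) (hqdef : q = (m:ℤ) - 2) (hsdef : s = (m:ℤ) - 4)
    (hn : 0 < n) (ht : t.Prime) (htodd : Odd t)
    (hmodd : Odd m) (hm3 : 3 ≤ m) (hmq : m = 3 ∨ Nat.Prime (m - 2)) (htm : t ≠ m - 2) :
    rmt m t n = rmt' m t n - 1 := by
  classical
  have htpos : (0:ℤ) < t := by exact_mod_cast ht.pos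
  have htoddZ : Odd (t:ℤ) := Int.odd_coe_nat t |>.mpr htodd
  obtain ⟨k, hk⟩ := hmodd
  have hqoddZ : Odd q := ⟨(k:ℤ) - 1, by rw [hqdef]; push_cast [hk]; ring⟩
  have hsoddZ : Odd s := ⟨(k:ℤ) - 2, by rw [hsdef]; push_cast [hk]; ring⟩
  have hq1 : (1:ℤ) ≤ q := by rw [hqdef]; omega
  have hqprime : m ≠ 3 → Prime q ∧ 3 ≤ q ∧ 5 ≤ m := by
    intro h3
    rcases hmq with h | h
    · exact absurd h h3
    · have hc : ((m - 2 : ℕ) : ℤ) = q := by rw [hqdef]; omega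
      have h2 := h.two_le
      have hne2 : m - 2 ≠ 2 := by omega
      refine ⟨hc ▸ Nat.prime_iff_prime_int.mp h, by omega, by omega⟩
  have h2P : ∀ c : ℤ, 2 * polygonal (m:ℤ) c = c * (q * c - s) := by
    intro c; rw [hqdef, hsdef]; exact two_mul_polygonal m ⟨k, hk⟩ c
  -- the trivial solution
  have htriv : (n, s.natAbs) ∈ S'set m t n := by
    rw [mem_S'set, ← hqdef, ← hsdef]
    have hy2 : ((s.natAbs : ℤ))^2 = s^2 := by rw [sq, sq, Int.natAbs_mul_self']
    simp only
    rw [hy2]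
  -- finiteness of Sset
  have hSfin : (Sset m t n).Finite := by
    apply Set.Finite.subset ((Set.finite_Iic n).prod (Set.finite_Iic n))
    rintro ⟨a, b⟩ hab
    rw [mem_Sset] at hab
    obtain ⟨h1, h2, h3, -⟩ := hab
    exact ⟨by simp only [Set.mem_Iic]; omega, by simp only [Set.mem_Iic]; omega⟩
  -- finiteness of S'set
  have hS'fin : (S'set m t n).Finite := by
    apply Set.Finite.subset ((Set.finite_Iic (2*m*n^2 + t*m^2 + t)).prod
      (Set.finite_Iic (2*m*n^2 + t*m^2 + t)))
    rintro ⟨x, y⟩ hxy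
    rw [mem_S'set, ← hqdef, ← hsdef] at hxy
    simp only at hxy
    have hqm : q ≤ (m:ℤ) := by rw [hqdef]; omega
    have hs2 : s^2 ≤ (m:ℤ)^2 := by
      have hm3' : (3:ℤ) ≤ (m:ℤ) := by exact_mod_cast hm3
      rw [hsdef]; nlinarith
    have e1 : (0:ℤ) ≤ (2*q - 1) * (x:ℤ)^2 := mul_nonneg (by linarith) (sq_nonneg _)
    have e1' : (0:ℤ) ≤ (2*q - 1) * (y:ℤ)^2 := mul_nonneg (by linarith) (sq_nonneg _)
    have e2 : (0:ℤ) ≤ (t:ℤ) * (y:ℤ)^2 := mul_nonneg (by linarith) (sq_nonneg _)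
    have e2' : (0:ℤ) ≤ 2*q*(x:ℤ)^2 := by positivity
    have e3 : (0:ℤ) ≤ 2*((m:ℤ) - q) * (n:ℤ)^2 := mul_nonneg (by linarith) (sq_nonneg _)
    have e4 : (0:ℤ) ≤ (t:ℤ) * ((m:ℤ)^2 - s^2) := mul_nonneg (by linarith) (by linarith)
    have e5 : (0:ℤ) ≤ ((t:ℤ) - 1) * (y:ℤ)^2 := mul_nonneg (by linarith) (sq_nonneg _)
    have hxb : (x:ℤ)^2 ≤ 2*(m:ℤ)*(n:ℤ)^2 + (t:ℤ)*(m:ℤ)^2 := by nlinarith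
    have hyb : (y:ℤ)^2 ≤ 2*(m:ℤ)*(n:ℤ)^2 + (t:ℤ)*(m:ℤ)^2 := by nlinarith
    have hxb' : x^2 ≤ 2*m*n^2 + t*m^2 := by exact_mod_cast hxb
    have hyb' : y^2 ≤ 2*m*n^2 + t*m^2 := by exact_mod_cast hyb
    have hx1 : x ≤ x^2 := Nat.le_self_pow (by norm_num) x
    have hy1 : y ≤ y^2 := Nat.le_self_pow (by norm_num) y
    exact ⟨by simp only [Set.mem_Iic]; omega, by simp only [Set.mem_Iic]; omega⟩
  -- main reverse construction
  have hrev : ∀ x y : ℕ, (x, y) ∈ S'set m t n → (x, y) ≠ (n, s.natAbs) →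
      x < n ∧ ((n-x)/2, (n+x)/2) ∈ Sset m t n := by
    intro x y hmem hne
    rw [mem_S'set, ← hqdef, ← hsdef] at hmem
    simp only at hmem
    have heq2 : 2*q*((n:ℤ)^2 - (x:ℤ)^2) = t*((y:ℤ)^2 - s^2) := by linarith
    -- y is odd
    have hyodd : Odd ((y:ℤ)) := by
      have h1 : Even ((t:ℤ)*((y:ℤ)^2 - s^2)) := ⟨q*((n:ℤ)^2 - (x:ℤ)^2), by linarith⟩
      have h2 : Even ((y:ℤ)^2 - s^2) := by
        rcases Int.even_mul.mp h1 with h | h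
        · exact absurd (Int.not_odd_iff_even.mpr h) (not_not_intro htoddZ)
        · exact h
      have h3 : Odd ((y:ℤ)^2) := by
        have := h2.add_odd (hsoddZ.pow (n := 2))
        simpa using this
      rcases Int.even_or_odd ((y:ℤ)) with h | h
      · have h4 : Even ((y:ℤ)^2) := by rw [sq]; exact h.mul_right _
        exact absurd h3 (Int.not_odd_iff_even.mpr h4)
      · exact h
    have hy1 : 1 ≤ (y:ℤ) := by
      obtain ⟨u, hu⟩ := hyodd
      have : (0:ℤ) ≤ (y:ℤ) := Int.natCast_nonneg y
      omega
    -- 8 divides y² - s²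
    have h8 : (8:ℤ) ∣ ((y:ℤ)^2 - s^2) := by
      obtain ⟨u, hu⟩ := hyodd
      obtain ⟨v, hv⟩ := hsoddZ
      obtain ⟨e, he⟩ := Int.even_mul_succ_self u
      obtain ⟨f, hf⟩ := Int.even_mul_succ_self v
      refine ⟨e - f, ?_⟩
      linear_combination ((y:ℤ) + 2*u + 1)*hu - (s + 2*v + 1)*hv + 4*he - 4*hf
    -- n - x is even
    have hnxeven : Even ((n:ℤ) - (x:ℤ)) := by
      have h8' : (8:ℤ) ∣ 2*q*((n:ℤ)^2 - (x:ℤ)^2) := heq2 ▸ (Dvd.dvd.mul_left h8 (t:ℤ))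
      obtain ⟨w, hw⟩ := h8'
      have h4 : q*((n:ℤ)^2 - (x:ℤ)^2) = 4*w := by linarith
      by_contra hoddc
      have ho1 : Odd ((n:ℤ) - x) := Int.not_even_iff_odd.mp hoddc
      have ho2 : Odd ((n:ℤ) + x) := by
        have h := ho1.add_even (⟨(x:ℤ), rfl⟩ : Even ((x:ℤ) + x))
        have hr : (n:ℤ) - x + ((x:ℤ) + x) = (n:ℤ) + x := by ring
        rwa [hr] at h
      have ho3 : Odd (q*((n:ℤ)^2 - (x:ℤ)^2)) := by
        have hrw : q*((n:ℤ)^2 - (x:ℤ)^2) = q*(((n:ℤ) - x)*((n:ℤ) + x)) := by ring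
        rw [hrw]; exact hqoddZ.mul (ho1.mul ho2)
      rw [h4] at ho3
      obtain ⟨r, hr⟩ := ho3
      omega
    -- divisibility by 2q
    have hd : (2*q ∣ s + (y:ℤ)) ∨ (2*q ∣ s - (y:ℤ) ∧ m ≠ 3) := by
      by_cases h3 : m = 3
      · left
        have hq1' : q = 1 := by rw [hqdef, h3]; norm_num
        rw [hq1', mul_one]
        exact (hsoddZ.add_odd hyodd).two_dvd
      · obtain ⟨hqp, hq3, hm5⟩ := hqprime h3
        have hqt : ¬ (q ∣ (t:ℤ)) := by
          intro hdvd
          have h1 : ((m - 2 : ℕ) : ℤ) = q := by rw [hqdef]; omega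
          rw [← h1, Int.natCast_dvd_natCast] at hdvd
          rcases Nat.Prime.eq_one_or_self_of_dvd ht _ hdvd with h | h
          · have : ((m - 2 : ℕ) : ℤ) = 1 := by rw [h]; norm_num
            omega
          · exact htm h.symm
        have hqd : q ∣ ((y:ℤ)^2 - s^2) := by
          have h1 : q ∣ (t:ℤ)*((y:ℤ)^2 - s^2) := ⟨2*((n:ℤ)^2 - (x:ℤ)^2), by linarith⟩
          rcases hqp.dvd_mul.mp h1 with h | h
          · exact absurd h hqt
          · exact h
        have hfac : q ∣ ((y:ℤ) - s) * ((y:ℤ) + s) := by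
          have hr : ((y:ℤ) - s) * ((y:ℤ) + s) = (y:ℤ)^2 - s^2 := by ring
          rw [hr]; exact hqd
        rcases hqp.dvd_mul.mp hfac with h | h
        · right
          refine ⟨?_, h3⟩
          have h' : q ∣ s - (y:ℤ) := by
            have := dvd_neg.mpr h
            rwa [neg_sub] at this
          exact odd_prime_dvd_even hqp hqoddZ h' (hsoddZ.sub_odd hyodd)
        · left
          have h' : q ∣ s + (y:ℤ) := by rwa [add_comm] at h
          exact odd_prime_dvd_even hqp hqoddZ h' (hsoddZ.add_odd hyodd)
    -- x < n
    have hxn : x < n := by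
      by_contra hge
      push_neg at hge
      have hxz : (n:ℤ) ≤ (x:ℤ) := by exact_mod_cast hge
      have hnz : (0:ℤ) ≤ (n:ℤ) := Int.natCast_nonneg n
      have hx2' : (n:ℤ)^2 ≤ (x:ℤ)^2 := pow_le_pow_left₀ hnz hxz 2
      have h1 : (t:ℤ)*((y:ℤ)^2 - s^2) ≤ 0 := by
        linarith [heq2, mul_nonneg (by linarith : (0:ℤ) ≤ 2*q)
          (by linarith : (0:ℤ) ≤ (x:ℤ)^2 - (n:ℤ)^2)]
      have hy2le : (y:ℤ)^2 ≤ s^2 := by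
        by_contra hcc
        push_neg at hcc
        have h2 : s^2 + 1 ≤ (y:ℤ)^2 := Int.add_one_le_iff.mpr hcc
        have h3 : (t:ℤ)*1 ≤ (t:ℤ)*((y:ℤ)^2 - s^2) :=
          mul_le_mul_of_nonneg_left (by linarith) (by linarith)
        linarith
      rcases eq_or_lt_of_le hy2le with hEq | hlt
      · -- trivial solution
        have h0 : 2*q*((n:ℤ)^2 - (x:ℤ)^2) = 0 := by rw [heq2, hEq]; ring
        have hx2 : (n:ℤ)^2 = (x:ℤ)^2 := by
          rcases mul_eq_zero.mp h0 with h | h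
          · exfalso; linarith
          · linarith
        have hxeq : x = n := by
          have : (x:ℕ)^2 = n^2 := by exact_mod_cast hx2.symm
          exact Nat.pow_left_injective (by norm_num) this
        have hyeq : y = s.natAbs := by
          have hs' : ((s.natAbs : ℤ))^2 = s^2 := by rw [sq, sq, Int.natAbs_mul_self']
          have : (y:ℕ)^2 = s.natAbs^2 := by
            have : ((y:ℤ))^2 = ((s.natAbs : ℤ))^2 := by rw [hs']; exact hEq
            exact_mod_cast this
          exact Nat.pow_left_injective (by norm_num) this
        exact hne (by rw [hxeq, hyeq])
      · by_cases h3 : m = 3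
        · have hs1 : s = -1 := by rw [hsdef, h3]; norm_num
          rw [hs1] at hlt
          nlinarith
        · obtain ⟨hqp, hq3, hm5⟩ := hqprime h3
          have hs_eq : s = q - 2 := by rw [hsdef, hqdef]; ring
          have hs1 : 1 ≤ s := by omega
          have hys : (y:ℤ) < s := by
            by_contra hge'
            push_neg at hge'
            have : s^2 ≤ (y:ℤ)^2 := pow_le_pow_left₀ (by linarith) hge' 2
            linarith
          rcases hd with h | ⟨h, -⟩
          · have hpos : 0 < s + (y:ℤ) := by linarith
            have := Int.le_of_dvd hpos h
            omega
          · have hpos : 0 < s - (y:ℤ) := by linarith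
            have := Int.le_of_dvd hpos h
            omega
    -- construct the membership
    refine ⟨hxn, ?_⟩
    obtain ⟨w, hw⟩ := hnxeven
    have ha2 : 2*(((n-x)/2 : ℕ) : ℤ) = (n:ℤ) - x := by omega
    have hb2 : 2*(((n+x)/2 : ℕ) : ℤ) = (n:ℤ) + x := by omega
    rw [mem_Sset]
    simp only
    refine ⟨by omega, by omega, by omega, ?_⟩
    rcases hd with hdl | ⟨hdr, hm3'⟩
    · have h2qc : 2*q*((s + (y:ℤ)) / (2*q)) = s + (y:ℤ) := Int.mul_ediv_cancel' hdl
      set c : ℤ := (s + (y:ℤ)) / (2*q) with hcdef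
      have hkey : (((n-x)/2 : ℕ) : ℤ) * (((n+x)/2 : ℕ) : ℤ) = t * polygonal m c := by
        have h8q : (8*q : ℤ) ≠ 0 := by intro h; omega
        apply mul_left_cancel₀ h8q
        linear_combination (4*q*(((n+x)/2 : ℕ) : ℤ))*ha2 + (2*q*((n:ℤ)-(x:ℤ)))*hb2 +
          hmem + (-(t:ℤ)*(2*q*c - s + (y:ℤ)))*h2qc + (-(4*q*(t:ℤ)))*(h2P c)
      refine ⟨c, ?_, hkey⟩
      intro hm34
      have h3 : m = 3 := by
        rcases hm34 with h | h
        · exact h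
        · exfalso; omega
      have hq1' : q = 1 := by rw [hqdef, h3]; norm_num
      have hs1' : s = -1 := by rw [hsdef, h3]; norm_num
      rw [hq1', hs1'] at h2qc
      have hcge : 0 ≤ c := by linarith
      rcases eq_or_lt_of_le hcge with hc0 | hcpos
      · exfalso
        have hP0 : polygonal m 0 = 0 := by unfold polygonal; simp
        rw [← hc0, hP0, mul_zero] at hkey
        rcases mul_eq_zero.mp hkey with h | h
        · have : ((n-x)/2 : ℕ) = 0 := by exact_mod_cast h
          omega
        · have : ((n+x)/2 : ℕ) = 0 := by exact_mod_cast h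
          omega
      · exact hcpos
    · have h2qc : 2*q*((s - (y:ℤ)) / (2*q)) = s - (y:ℤ) := Int.mul_ediv_cancel' hdr
      set c : ℤ := (s - (y:ℤ)) / (2*q) with hcdef
      have hkey : (((n-x)/2 : ℕ) : ℤ) * (((n+x)/2 : ℕ) : ℤ) = t * polygonal m c := by
        have h8q : (8*q : ℤ) ≠ 0 := by intro h; omega
        apply mul_left_cancel₀ h8q
        linear_combination (4*q*(((n+x)/2 : ℕ) : ℤ))*ha2 + (2*q*((n:ℤ)-(x:ℤ)))*hb2 +
          hmem + (-(t:ℤ)*(2*q*c - s - (y:ℤ)))*h2qc + (-(4*q*(t:ℤ)))*(h2P c)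
      refine ⟨c, ?_, hkey⟩
      intro hm34
      exfalso
      rcases hm34 with h | h
      · exact hm3' h
      · omega
  -- forward inclusion
  have hfwd : Sset m t n ⊆
      (fun p : ℕ × ℕ => ((n - p.1)/2, (n + p.1)/2)) '' (S'set m t n \ {(n, s.natAbs)}) := by
    rintro ⟨a, b⟩ hab
    rw [mem_Sset] at hab
    obtain ⟨ha, hab2, habn, c, hcpos, hc⟩ := hab
    simp only at ha hab2 habn hc
    refine ⟨(b - a, (2*q*c - s).natAbs), ⟨?_, ?_⟩, ?_⟩
    · rw [mem_S'set, ← hqdef, ← hsdef]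
      simp only
      have hx : ((b - a : ℕ) : ℤ) = (b:ℤ) - a := by omega
      have hy2 : (((2*q*c - s).natAbs : ℤ))^2 = (2*q*c - s)^2 := by
        rw [sq, sq, Int.natAbs_mul_self']
      have hn' : (n:ℤ) = (a:ℤ) + b := by omega
      rw [hx, hy2, hn']
      linear_combination (8*q)*hc + (4*q*(t:ℤ))*(h2P c)
    · simp only [Set.mem_singleton_iff, Prod.mk.injEq, not_and]
      intro hEq
      omega
    · simp only [Prod.mk.injEq]
      constructor
      · omega
      · omega
  -- injectivity
  have hinj : Set.InjOn (fun p : ℕ × ℕ => ((n - p.1)/2, (n + p.1)/2))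
      (S'set m t n \ {(n, s.natAbs)}) := by
    rintro ⟨x₁, y₁⟩ h₁ ⟨x₂, y₂⟩ h₂ hEq
    have hne₁ : ((x₁, y₁) : ℕ × ℕ) ≠ (n, s.natAbs) := by
      simpa [Set.mem_singleton_iff] using h₁.2
    have hne₂ : ((x₂, y₂) : ℕ × ℕ) ≠ (n, s.natAbs) := by
      simpa [Set.mem_singleton_iff] using h₂.2
    have hx₁ := (hrev x₁ y₁ h₁.1 hne₁).1
    have hx₂ := (hrev x₂ y₂ h₂.1 hne₂).1
    simp only [Prod.mk.injEq] at hEq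
    obtain ⟨e1, e2⟩ := hEq
    have hxx : x₁ = x₂ := by omega
    subst hxx
    have m1 := h₁.1
    have m2 := h₂.1
    rw [mem_S'set, ← hqdef, ← hsdef] at m1 m2
    simp only at m1 m2
    have hyy : (t:ℤ) * (y₁:ℤ)^2 = (t:ℤ) * (y₂:ℤ)^2 := by linarith
    have hyy2 : (y₁:ℤ)^2 = (y₂:ℤ)^2 := mul_left_cancel₀ (ne_of_gt htpos) hyy
    have hyynat : y₁^2 = y₂^2 := by exact_mod_cast hyy2
    have hyy3 : y₁ = y₂ := Nat.pow_left_injective (by norm_num) hyynat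
    rw [hyy3]
  -- image equality
  have himg : (fun p : ℕ × ℕ => ((n - p.1)/2, (n + p.1)/2)) '' (S'set m t n \ {(n, s.natAbs)})
      = Sset m t n := by
    apply Set.Subset.antisymm
    · rintro _ ⟨⟨x, y⟩, ⟨hp1, hp2⟩, rfl⟩
      have hne' : ((x, y) : ℕ × ℕ) ≠ (n, s.natAbs) := by
        simpa [Set.mem_singleton_iff] using hp2
      exact (hrev x y hp1 hne').2
    · exact hfwd
  rw [rmt_eq, rmt'_eq, ← himg, Set.ncard_image_of_injOn hinj,
    Set.ncard_diff_singleton_of_mem htriv]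

theorem stmt_3 (m t n : ℕ) (hn : 0 < n) (ht : t.Prime) (htodd : Odd t)
    (hm : m = 3 ∨ ∃ p : ℕ, p.Prime ∧ Odd p ∧ m = p + 2) (htm : t ≠ m - 2) :
    rmt m t n = rmt' m t n - 1 := by
  rcases hm with h3 | ⟨p, hp, hpodd, hmp⟩
  · subst h3
    exact aux_main 3 t n _ _ rfl rfl hn ht htodd ⟨1, rfl⟩ (by norm_num) (Or.inl rfl) htm
  · subst hmp
    obtain ⟨j, hj⟩ := hpodd
    have hp3 : 3 ≤ p := by
      have := hp.two_le
      omega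
    refine aux_main (p + 2) t n _ _ rfl rfl hn ht htodd ⟨j + 1, by omega⟩ (by omega)
      (Or.inr (by simpa using hp)) htm
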